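/- (Theorem 1, summed residual bound) Let ω ∈ (0,2) and θ ≥ 0 be such that δ = 2θ/ω + ((2−ω)/ω)·minᵢ Dᵢᵢ > 0, and suppose M ∈ ℝ is a lower bound for f. Let (xᵏ)ₖ≥0 be a sequence in ℝⁿ and (vᵏ⁺¹)ₖ≥0 vectors such that for every k, vᵏ⁺¹ is a subgradient of h at xᵏ⁺¹ and B xᵏ⁺¹ + b + C xᵏ + vᵏ⁺¹ = 0. Then for every k ≥ 1, (δ / (2‖C‖²)) · Σ_{i=0}^{k−1} ‖A xⁱ⁺¹ + b + vⁱ⁺¹‖² ≤ f(x⁰) − M. -/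

import Mathlib

open scoped RealInnerProductSpace
open Matrix Filter

noncomputable section

/-- Euclidean space ℝⁿ. -/
abbrev E (n : ℕ) := EuclideanSpace ℝ (Fin n)

/-- Matrix-vector multiplication, valued in Euclidean space. -/
def mulVecE {n : ℕ} (M : Matrix (Fin n) (Fin n) ℝ) (x : E n) : E n :=
  (WithLp.equiv 2 (Fin n → ℝ)).symm (M.mulVec ((WithLp.equiv 2 (Fin n → ℝ)) x))

/-- Operator (spectral) norm of a matrix. -/
def opNorm {n : ℕ} (M : Matrix (Fin n) (Fin n) ℝ) : ℝ :=
  ‖Matrix.toEuclideanCLM (𝕜 := ℝ) M‖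

/-- The diagonal part `D` of `A`. -/
def Dmat {n : ℕ} (A : Matrix (Fin n) (Fin n) ℝ) : Matrix (Fin n) (Fin n) ℝ :=
  Matrix.diagonal fun i => A i i

/-- The strictly lower triangular part `L` of `A`. -/
def Lmat {n : ℕ} (A : Matrix (Fin n) (Fin n) ℝ) : Matrix (Fin n) (Fin n) ℝ :=
  Matrix.of fun i j => if (j : ℕ) < (i : ℕ) then A i j else 0

/-- `B = L + (1/ω)(D + θI)`. -/
def Bmat {n : ℕ} (ω θ : ℝ) (A : Matrix (Fin n) (Fin n) ℝ) : Matrix (Fin n) (Fin n) ℝ :=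
  Lmat A + ω⁻¹ • (Dmat A + θ • (1 : Matrix (Fin n) (Fin n) ℝ))

/-- `C = Lᵀ + (1/ω)((ω−1)D − θI)`. -/
def Cmat {n : ℕ} (ω θ : ℝ) (A : Matrix (Fin n) (Fin n) ℝ) : Matrix (Fin n) (Fin n) ℝ :=
  (Lmat A)ᵀ + ω⁻¹ • ((ω - 1) • Dmat A - θ • (1 : Matrix (Fin n) (Fin n) ℝ))

/-- `v` is a subgradient of `h` at `z`. -/
def IsSubgradient {n : ℕ} (h : E n → ℝ) (v z : E n) : Prop :=
  ∀ y, h z + ⟪v, y - z⟫ ≤ h y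

/-- The composite objective `f(x) = (1/2)⟨x, Ax⟩ + ⟨b, x⟩ + h(x)`. -/
def fObj {n : ℕ} (A : Matrix (Fin n) (Fin n) ℝ) (b : E n) (h : E n → ℝ) (x : E n) : ℝ :=
  (1/2) * ⟪x, mulVecE A x⟫ + ⟪b, x⟫ + h x

/-- `z` is a triangle-proximal point of `x`: there is a subgradient `v` of `h` at `z`
with `Bz + b + Cx + v = 0`. -/
def IsTriangleProx {n : ℕ} (ω θ : ℝ) (A : Matrix (Fin n) (Fin n) ℝ) (b : E n)
    (h : E n → ℝ) (x z : E n) : Prop :=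
  ∃ v, IsSubgradient h v z ∧
    mulVecE (Bmat ω θ A) z + b + mulVecE (Cmat ω θ A) x + v = 0
lemma mulVecE_eq_clm {n : ℕ} (M : Matrix (Fin n) (Fin n) ℝ) (x : E n) :
    mulVecE M x = Matrix.toEuclideanCLM (𝕜 := ℝ) M x := rfl

lemma norm_mulVecE_le {n : ℕ} (M : Matrix (Fin n) (Fin n) ℝ) (x : E n) :
    ‖mulVecE M x‖ ≤ opNorm M * ‖x‖ := by
  rw [mulVecE_eq_clm]; exact (Matrix.toEuclideanCLM (𝕜 := ℝ) M).le_opNorm x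

lemma mulVecE_apply {n : ℕ} (M : Matrix (Fin n) (Fin n) ℝ) (x : E n) (i : Fin n) :
    mulVecE M x i = ∑ j, M i j * x j := rfl

lemma mulVecE_add_left {n : ℕ} (M N : Matrix (Fin n) (Fin n) ℝ) (x : E n) :
    mulVecE (M + N) x = mulVecE M x + mulVecE N x := by
  ext i
  simp [mulVecE_apply, Finset.sum_add_distrib, add_mul, Matrix.add_apply]

lemma mulVecE_sub_right {n : ℕ} (M : Matrix (Fin n) (Fin n) ℝ) (x y : E n) :
    mulVecE M (x - y) = mulVecE M x - mulVecE M y := by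
  simp only [mulVecE_eq_clm, map_sub]

lemma inner_mulVecE {n : ℕ} (M : Matrix (Fin n) (Fin n) ℝ) (x y : E n) :
    ⟪x, mulVecE M y⟫ = ⟪mulVecE Mᵀ x, y⟫ := by
  simp only [PiLp.inner_apply, RCLike.inner_apply, conj_trivial, mulVecE_apply]
  simp only [Finset.mul_sum, Finset.sum_mul]
  rw [Finset.sum_comm]
  exact Finset.sum_congr rfl fun i _ => Finset.sum_congr rfl fun j _ => by
    simp [Matrix.transpose_apply]; ring

lemma lmat_split {n : ℕ} (A : Matrix (Fin n) (Fin n) ℝ) (hA : A.IsSymm) :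
    Lmat A + (Lmat A)ᵀ + Dmat A = A := by
  ext i j
  simp only [Matrix.add_apply, Lmat, Matrix.transpose_apply, Matrix.of_apply, Dmat,
    Matrix.diagonal_apply]
  rcases lt_trichotomy (j : ℕ) (i : ℕ) with hlt | heq | hgt
  · have : i ≠ j := fun h => by simp [h] at hlt
    simp [hlt, not_lt.mpr hlt.le, this, Fin.ext_iff, hlt.ne]
  · have : i = j := Fin.ext heq.symm
    simp [this]
  · have : i ≠ j := fun h => by simp [h] at hgt
    have := hA.apply i j  -- Aᵀ i j = A i j ?
    simp [not_lt.mpr hgt.le, hgt, Fin.ext_iff, hgt.ne', ‹i ≠ j›]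
    simpa [Matrix.transpose_apply] using Matrix.IsSymm.apply hA i j

lemma BplusC {n : ℕ} (ω θ : ℝ) (hω : ω ≠ 0) (A : Matrix (Fin n) (Fin n) ℝ) (hA : A.IsSymm) :
    Bmat ω θ A + Cmat ω θ A = A := by
  have h1 : Bmat ω θ A + Cmat ω θ A = Lmat A + (Lmat A)ᵀ + ω⁻¹ • (ω • Dmat A) := by
    unfold Bmat Cmat; module
  rw [h1, inv_smul_smul₀ hω, lmat_split A hA]

lemma BsubCt {n : ℕ} (ω θ : ℝ) (A : Matrix (Fin n) (Fin n) ℝ) :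
    Bmat ω θ A - (Cmat ω θ A)ᵀ
      = ω⁻¹ • ((2 - ω) • Dmat A + (2 * θ) • (1 : Matrix (Fin n) (Fin n) ℝ)) := by
  have hD : (Dmat A)ᵀ = Dmat A := Matrix.diagonal_transpose _
  have h1 : (Cmat ω θ A)ᵀ = Lmat A + ω⁻¹ • ((ω - 1) • Dmat A - θ • (1 : Matrix (Fin n) (Fin n) ℝ)) := by
    unfold Cmat
    simp [Matrix.transpose_add, Matrix.transpose_smul, Matrix.transpose_sub, hD]
  rw [h1]; unfold Bmat; module

lemma diag_form {n : ℕ} (ω θ : ℝ) (A : Matrix (Fin n) (Fin n) ℝ) :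
    ω⁻¹ • ((2 - ω) • Dmat A + (2 * θ) • (1 : Matrix (Fin n) (Fin n) ℝ))
      = Matrix.diagonal (fun i => ω⁻¹ * ((2 - ω) * A i i + 2 * θ)) := by
  ext i j
  by_cases hij : i = j <;>
    simp [Dmat, Matrix.diagonal_apply, Matrix.one_apply, hij, mul_comm] <;> ring

lemma coercive {n : ℕ} (hn : 0 < n) (ω θ : ℝ) (hω : ω ∈ Set.Ioo (0:ℝ) 2) (hθ : 0 ≤ θ)
    (A : Matrix (Fin n) (Fin n) ℝ) (δ : ℝ)
    (hδ : δ = 2 * θ / ω + (2 - ω) / ω * ⨅ i, A i i) (d : E n) :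
    δ * ‖d‖ ^ 2 ≤ ⟪d, mulVecE (Bmat ω θ A - (Cmat ω θ A)ᵀ) d⟫ := by
  haveI : Nonempty (Fin n) := ⟨⟨0, hn⟩⟩
  rw [BsubCt, diag_form]
  have hnorm : ‖d‖ ^ 2 = ∑ i, d i * d i := by
    rw [EuclideanSpace.norm_sq_eq]
    exact Finset.sum_congr rfl fun i _ => by rw [Real.norm_eq_abs, sq_abs, sq]
  rw [hnorm, Finset.mul_sum]
  simp only [PiLp.inner_apply, RCLike.inner_apply, conj_trivial, mulVecE_apply]
  apply Finset.sum_le_sum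
  intro i _
  have hcoef : δ ≤ ω⁻¹ * ((2 - ω) * A i i + 2 * θ) := by
    have hinf : (⨅ j, A j j) ≤ A i i := ciInf_le (Finite.bddBelow_range _) i
    have hratio : 0 ≤ (2 - ω) / ω := by
      apply div_nonneg (by linarith [hω.2]) hω.1.le
    have : (2 - ω) / ω * (⨅ j, A j j) ≤ (2 - ω) / ω * A i i :=
      mul_le_mul_of_nonneg_left hinf hratio
    rw [hδ]
    have : ω⁻¹ * ((2 - ω) * A i i + 2 * θ) = 2 * θ / ω + (2 - ω) / ω * A i i := by
      field_simp; ring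
    rw [this]; linarith [mul_le_mul_of_nonneg_left hinf hratio]
  have hsq : 0 ≤ d i * d i := mul_self_nonneg _
  have hmv : ∑ j, Matrix.diagonal (fun i => ω⁻¹ * ((2 - ω) * A i i + 2 * θ)) i j * d j
      = ω⁻¹ * ((2 - ω) * A i i + 2 * θ) * d i := by
    rw [Finset.sum_eq_single i]
    · simp
    · intro b _ hb
      rw [Matrix.diagonal_apply_ne _ (Ne.symm hb), zero_mul]
    · intro hmem; exact absurd (Finset.mem_univ i) hmem
  calc δ * (d i * d i) ≤ ω⁻¹ * ((2 - ω) * A i i + 2 * θ) * (d i * d i) :=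
        mul_le_mul_of_nonneg_right hcoef hsq
    _ = (∑ j, Matrix.diagonal (fun i => ω⁻¹ * ((2 - ω) * A i i + 2 * θ)) i j * d j) * d i := by
        rw [hmv]; ring

lemma mulVecE_sub_left {n : ℕ} (M N : Matrix (Fin n) (Fin n) ℝ) (x : E n) :
    mulVecE (M - N) x = mulVecE M x - mulVecE N x := by
  ext i
  simp only [mulVecE_apply, Matrix.sub_apply, sub_mul, Finset.sum_sub_distrib]
  rfl

lemma mulVecE_add_right {n : ℕ} (M : Matrix (Fin n) (Fin n) ℝ) (x y : E n) :
    mulVecE M (x + y) = mulVecE M x + mulVecE M y := by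
  simp only [mulVecE_eq_clm, map_add]

lemma quad_expand {n : ℕ} (A : Matrix (Fin n) (Fin n) ℝ) (hA : A.IsSymm) (b : E n)
    (z d : E n) :
    (1/2) * ⟪z + d, mulVecE A (z + d)⟫ + ⟪b, z + d⟫
        - ((1/2) * ⟪z, mulVecE A z⟫ + ⟪b, z⟫)
      = ⟪mulVecE A z + b, d⟫ + (1/2) * ⟪d, mulVecE A d⟫ := by
  have hsym : ⟪z, mulVecE A d⟫ = ⟪d, mulVecE A z⟫ := by
    rw [inner_mulVecE, hA.eq, real_inner_comm]
  simp only [mulVecE_add_right, inner_add_left, inner_add_right]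
  rw [hsym, real_inner_comm (mulVecE A z) d]; ring

lemma descent {n : ℕ} (hn : 0 < n) (A : Matrix (Fin n) (Fin n) ℝ) (hA : A.IsSymm)
    (b : E n) (h : E n → ℝ) (ω θ : ℝ) (hω : ω ∈ Set.Ioo (0:ℝ) 2) (hθ : 0 ≤ θ)
    (δ : ℝ) (hδ : δ = 2 * θ / ω + (2 - ω) / ω * ⨅ i, A i i)
    (xk z v : E n) (hsub : IsSubgradient h v z)
    (heq : mulVecE (Bmat ω θ A) z + b + mulVecE (Cmat ω θ A) xk + v = 0) :
    mulVecE A z + b + v = -(mulVecE (Cmat ω θ A) (xk - z)) ∧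
      δ / 2 * ‖xk - z‖ ^ 2 ≤ fObj A b h xk - fObj A b h z := by
  set d := xk - z with hd
  have hsplit : mulVecE A z = mulVecE (Bmat ω θ A) z + mulVecE (Cmat ω θ A) z := by
    rw [← mulVecE_add_left, BplusC ω θ (ne_of_gt hω.1) A hA]
  have hres : mulVecE A z + b + v = -(mulVecE (Cmat ω θ A) d) := by
    have h1 : mulVecE A z + b + v
        = (mulVecE (Bmat ω θ A) z + b + mulVecE (Cmat ω θ A) xk + v)
          + (mulVecE (Cmat ω θ A) z - mulVecE (Cmat ω θ A) xk) := by
      rw [hsplit]; abel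
    rw [h1, heq, zero_add, hd, mulVecE_sub_right]; abel
  refine ⟨hres, ?_⟩
  have hz : xk = z + d := by rw [hd]; abel
  have hq : fObj A b h xk - fObj A b h z
      = ⟪mulVecE A z + b, d⟫ + (1/2) * ⟪d, mulVecE A d⟫ + (h xk - h z) := by
    unfold fObj
    rw [hz] at *
    have := quad_expand A hA b z d
    linarith [this]
  have hh : h z + ⟪v, d⟫ ≤ h xk := by
    have := hsub xk
    rwa [← hd] at this
  have hlow : ⟪mulVecE A z + b + v, d⟫ + (1/2) * ⟪d, mulVecE A d⟫
      ≤ fObj A b h xk - fObj A b h z := by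
    rw [hq, inner_add_left]
    linarith
  have hid : ⟪mulVecE A z + b + v, d⟫ + (1/2) * ⟪d, mulVecE A d⟫
      = (1/2) * ⟪d, mulVecE (Bmat ω θ A - (Cmat ω θ A)ᵀ) d⟫ := by
    rw [hres]
    have hAd : mulVecE A d = mulVecE (Bmat ω θ A) d + mulVecE (Cmat ω θ A) d := by
      rw [← mulVecE_add_left, BplusC ω θ (ne_of_gt hω.1) A hA]
    rw [mulVecE_sub_left, hAd]
    have hct : ⟪d, mulVecE (Cmat ω θ A)ᵀ d⟫ = ⟪mulVecE (Cmat ω θ A) d, d⟫ := by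
      rw [inner_mulVecE, Matrix.transpose_transpose]
    simp only [inner_neg_left, inner_add_right, inner_sub_right, hct]
    rw [real_inner_comm (mulVecE (Cmat ω θ A) d) d]
    ring
  have hco := coercive hn ω θ hω hθ A δ hδ d
  calc δ / 2 * ‖d‖ ^ 2 = (1/2) * (δ * ‖d‖ ^ 2) := by ring
    _ ≤ (1/2) * ⟪d, mulVecE (Bmat ω θ A - (Cmat ω θ A)ᵀ) d⟫ := by linarith
    _ = ⟪mulVecE A z + b + v, d⟫ + (1/2) * ⟪d, mulVecE A d⟫ := hid.symm
    _ ≤ _ := hlow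

/-- Theorem 1, summed residual bound. -/
theorem msm_summed_residual_bound {n : ℕ} (hn : 0 < n)
    (A : Matrix (Fin n) (Fin n) ℝ) (hA : A.IsSymm) (b : E n) (h : E n → ℝ)
    (ω θ : ℝ) (hω : ω ∈ Set.Ioo (0 : ℝ) 2) (hθ : 0 ≤ θ)
    (δ : ℝ) (hδ : δ = 2 * θ / ω + (2 - ω) / ω * ⨅ i, A i i) (hδpos : 0 < δ)
    (M : ℝ) (hM : ∀ y : E n, M ≤ fObj A b h y)
    (x v : ℕ → E n)
    (hv : ∀ k : ℕ, IsSubgradient h (v (k + 1)) (x (k + 1)))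
    (heq : ∀ k : ℕ, mulVecE (Bmat ω θ A) (x (k + 1)) + b
        + mulVecE (Cmat ω θ A) (x k) + v (k + 1) = 0) :
    ∀ k : ℕ, 1 ≤ k →
      δ / (2 * opNorm (Cmat ω θ A) ^ 2)
          * ∑ i ∈ Finset.range k, ‖mulVecE A (x (i + 1)) + b + v (i + 1)‖ ^ 2
        ≤ fObj A b h (x 0) - M := by
  intro k hk
  set c := opNorm (Cmat ω θ A) with hc
  have hterm : ∀ i : ℕ,
      δ / (2 * c ^ 2) * ‖mulVecE A (x (i + 1)) + b + v (i + 1)‖ ^ 2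
        ≤ fObj A b h (x i) - fObj A b h (x (i + 1)) := by
    intro i
    obtain ⟨hres, hdes⟩ := descent hn A hA b h ω θ hω hθ δ hδ (x i) (x (i + 1)) (v (i + 1))
      (hv i) (heq i)
    have hrn : ‖mulVecE A (x (i + 1)) + b + v (i + 1)‖ ≤ c * ‖x i - x (i + 1)‖ := by
      rw [hres, norm_neg]; exact norm_mulVecE_le _ _
    have hd2 : 0 ≤ δ / 2 * ‖x i - x (i + 1)‖ ^ 2 := by positivity
    by_cases hczero : c = 0
    · have h0 : ‖mulVecE A (x (i + 1)) + b + v (i + 1)‖ = 0 :=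
        le_antisymm (by simpa [hczero] using hrn) (norm_nonneg _)
      rw [h0]
      simpa using le_trans hd2 hdes
    · have hcpos : 0 < c := lt_of_le_of_ne (norm_nonneg _) (Ne.symm hczero)
      have hsq : ‖mulVecE A (x (i + 1)) + b + v (i + 1)‖ ^ 2
          ≤ c ^ 2 * ‖x i - x (i + 1)‖ ^ 2 := by nlinarith [norm_nonneg (mulVecE A (x (i + 1)) + b + v (i + 1)), norm_nonneg (x i - x (i+1))]
      have h1 : δ / (2 * c ^ 2) * ‖mulVecE A (x (i + 1)) + b + v (i + 1)‖ ^ 2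
          ≤ δ / (2 * c ^ 2) * (c ^ 2 * ‖x i - x (i + 1)‖ ^ 2) :=
        mul_le_mul_of_nonneg_left hsq (by positivity)
      have h2 : δ / (2 * c ^ 2) * (c ^ 2 * ‖x i - x (i + 1)‖ ^ 2)
          = δ / 2 * ‖x i - x (i + 1)‖ ^ 2 := by
        field_simp
      linarith
  calc δ / (2 * c ^ 2) * ∑ i ∈ Finset.range k, ‖mulVecE A (x (i + 1)) + b + v (i + 1)‖ ^ 2
      = ∑ i ∈ Finset.range k, δ / (2 * c ^ 2) * ‖mulVecE A (x (i + 1)) + b + v (i + 1)‖ ^ 2 := by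
        rw [Finset.mul_sum]
    _ ≤ ∑ i ∈ Finset.range k, (fObj A b h (x i) - fObj A b h (x (i + 1))) :=
        Finset.sum_le_sum fun i _ => hterm i
    _ = fObj A b h (x 0) - fObj A b h (x k) := Finset.sum_range_sub' (fun i => fObj A b h (x i)) k
    _ ≤ fObj A b h (x 0) - M := by linarith [hM (x k)]
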